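/- In an MCR game all of whose vertices have finite value (Val(v) ∈ ℤ for every v), the non-increasing sequence of i-step values (val_i)_{i≥0} stabilises after at most (2|V|−1)·W·|V| + |V| steps. -/

import Mathlib

open Filter

/-- A two-player turn-based weighted game graph. `owner v = true` means that
vertex `v` belongs to player Max, `owner v = false` that it belongs to player Min.
Every vertex has at least one successor. -/
structure Game (V : Type) where
  owner : V → Bool
  E : V → V → Prop
  nonempty : ∀ v, ∃ v', E v v'
  w : V → V → ℤ

namespace Game

variable {V : Type}

/-- The (reversed) history of the first `k` vertices of `π` (most recent first). -/
def hist (π : ℕ → V) (k : ℕ) : List V := (List.ofFn fun i : Fin k => π i).reverse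

/-- A strategy: given the (reversed) list of previously visited vertices and the current
vertex, it picks a successor of the current vertex. -/
structure Strategy (g : Game V) where
  next : List V → V → V
  valid : ∀ h v, g.E v (next h v)

/-- A memoryless strategy only depends on the current vertex. -/
def Strategy.Memoryless {g : Game V} (s : g.Strategy) : Prop :=
  ∀ h h' v, s.next h v = s.next h' v

/-- A finite-memory strategy is one encoded by a deterministic Moore machine
`⟨M, m0, up, dec⟩`: the choice after a finite play is `dec` applied to the memory state
reached by reading the play (the initial vertex is not read) and to the last vertex. -/
def Strategy.FiniteMemory {g : Game V} (s : g.Strategy) : Prop :=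
  ∃ (M : Type) (_ : Fintype M) (m0 : M) (up : M → V → M) (dec : M → V → V),
    ∀ h v, s.next h v = dec (List.foldl up m0 (((h.reverse ++ [v]).drop 1))) v

variable (g : Game V)

/-- Next vertex chosen by the owner of the current vertex. -/
def step (σ τ : g.Strategy) (h : List V) (v : V) : V :=
  if g.owner v then σ.next h v else τ.next h v

/-- Current vertex and reversed history after `k` steps of the play `Play(v, σ, τ)`. -/
def playAux (σ τ : g.Strategy) (v : V) : ℕ → V × List V
  | 0 => (v, [])
  | k+1 =>
      let p := playAux σ τ v k
      (g.step σ τ p.2 p.1, p.1 :: p.2)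

/-- `Play(v, σ, τ)`: the unique play starting in `v` and conforming to the
strategy `σ` of Max and the strategy `τ` of Min. -/
def play (σ τ : g.Strategy) (v : V) (k : ℕ) : V := (g.playAux σ τ v k).1

/-- An infinite sequence of vertices is a play when consecutive vertices are linked
by edges. -/
def IsPlay (π : ℕ → V) : Prop := ∀ k, g.E (π k) (π (k+1))

/-- A play conforms to a strategy `s` of the player `p` if, whenever the current vertex
belongs to `p`, the next vertex is the one prescribed by `s`. -/
def Conforms (p : Bool) (s : g.Strategy) (π : ℕ → V) : Prop :=
  ∀ k, g.owner (π k) = p → π (k+1) = s.next (hist π k) (π k)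

/-- Total-payoff of the prefix of length `k`: the sum of the first `k` edge weights. -/
def TPfin (π : ℕ → V) (k : ℕ) : ℤ := ∑ i ∈ Finset.range k, g.w (π i) (π (i+1))

/-- Total payoff of an infinite play: `liminf` of the payoffs of its prefixes. -/
noncomputable def TP (π : ℕ → V) : EReal :=
  liminf (fun k => (((g.TPfin π k : ℤ) : ℝ) : EReal)) atTop

/-- Mean payoff of an infinite play. -/
noncomputable def MP (π : ℕ → V) : EReal :=
  liminf (fun k => ((((g.TPfin π k : ℤ) : ℝ) / (k : ℝ)) : EReal)) atTop

open Classical in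
/-- Min-cost reachability payoff with target `t`: total payoff up to the first visit
of `t`, and `+∞` if `t` is never visited. -/
noncomputable def MCR (t : V) (π : ℕ → V) : EReal :=
  if h : ∃ k, π k = t then (((g.TPfin π (Nat.find h) : ℤ) : ℝ) : EReal) else ⊤

open Classical in
/-- `MCR` payoff restricted to reaching the target among the first `i+1` vertices. -/
noncomputable def MCRbd (t : V) (i : ℕ) (π : ℕ → V) : EReal :=
  if ∃ k ≤ i, π k = t then g.MCR t π else ⊤

/-- Value of a strategy `σ` of Max from `v` : `inf_τ P(Play(v, σ, τ))`. -/
noncomputable def valMax (P : (ℕ → V) → EReal) (v : V) (σ : g.Strategy) : EReal :=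
  ⨅ τ : g.Strategy, P (g.play σ τ v)

/-- Value of a strategy `τ` of Min from `v` : `sup_σ P(Play(v, σ, τ))`. -/
noncomputable def valMin (P : (ℕ → V) → EReal) (v : V) (τ : g.Strategy) : EReal :=
  ⨆ σ : g.Strategy, P (g.play σ τ v)

/-- Lower value `Val⁻(v) = sup_σ inf_τ P(Play(v, σ, τ))`. -/
noncomputable def lowerVal (P : (ℕ → V) → EReal) (v : V) : EReal :=
  ⨆ σ : g.Strategy, g.valMax P v σ

/-- Upper value `Val⁺(v) = inf_τ sup_σ P(Play(v, σ, τ))`. -/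
noncomputable def upperVal (P : (ℕ → V) → EReal) (v : V) : EReal :=
  ⨅ τ : g.Strategy, g.valMin P v τ

end Game


/-! ### Auxiliary material -/

section ERealAux

open EReal

lemma ereal_neg_add_cancel (c : ℝ) (x : EReal) :
    ((-c : ℝ) : EReal) + ((c : ℝ) + x) = x := by
  induction x using EReal.rec with
  | bot => simp
  | coe y => rw [← EReal.coe_add, ← EReal.coe_add, EReal.coe_eq_coe_iff]; ring
  | top => rw [EReal.coe_add_top, EReal.coe_add_top]

lemma ereal_add_iInf (c : ℝ) {ι : Sort*} (f : ι → EReal) :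
    ((c : ℝ) : EReal) + (⨅ i, f i) = ⨅ i, ((c : ℝ) + f i) := by
  have le1 : ∀ (d : ℝ) (g : ι → EReal), ((d:ℝ):EReal) + (⨅ i, g i) ≤ ⨅ i, ((d:ℝ) + g i) :=
    fun d g => le_iInf fun i => add_le_add_right (iInf_le g i) _
  refine le_antisymm (le1 c f) ?_
  have h2 := le1 (-c) (fun i => ((c:ℝ):EReal) + f i)
  simp only [ereal_neg_add_cancel] at h2
  have h3 := add_le_add_right h2 ((c : ℝ) : EReal)
  calc ⨅ i, ((c:ℝ):EReal) + f i
      = ((c:ℝ):EReal) + (((-c:ℝ):EReal) + ⨅ i, ((c:ℝ):EReal) + f i) := by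
        rw [show ((c:ℝ):EReal) = ((-(-c):ℝ):EReal) by norm_num, ereal_neg_add_cancel]
    _ ≤ ((c:ℝ):EReal) + ⨅ i, f i := h3

lemma ereal_add_iSup (c : ℝ) {ι : Sort*} (f : ι → EReal) :
    ((c : ℝ) : EReal) + (⨆ i, f i) = ⨆ i, ((c : ℝ) + f i) := by
  have le1 : ∀ (d : ℝ) (g : ι → EReal), (⨆ i, ((d:ℝ) + g i)) ≤ ((d:ℝ):EReal) + ⨆ i, g i :=
    fun d g => iSup_le fun i => add_le_add_right (le_iSup g i) _
  refine le_antisymm ?_ (le1 c f)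
  have h2 := le1 (-c) (fun i => ((c:ℝ):EReal) + f i)
  simp only [ereal_neg_add_cancel] at h2
  have h3 := add_le_add_right h2 ((c : ℝ) : EReal)
  calc ((c:ℝ):EReal) + ⨆ i, f i
      ≤ ((c:ℝ):EReal) + (((-c:ℝ):EReal) + ⨆ i, ((c:ℝ):EReal) + f i) := h3
    _ = ⨆ i, ((c:ℝ):EReal) + f i := by
        rw [show ((c:ℝ):EReal) = ((-(-c):ℝ):EReal) by norm_num, ereal_neg_add_cancel]

lemma ereal_le_of_forall_lt_le {a b : EReal} (h : ∀ c, b < c → a ≤ c) : a ≤ b := by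
  by_contra hc
  push_neg at hc
  obtain ⟨c, hbc, hca⟩ := exists_between hc
  exact absurd (h c hbc) (not_le.2 hca)

lemma exists_iSup_eq {ι : Type*} [Finite ι] [Nonempty ι] (f : ι → EReal) :
    ∃ i, (⨆ j, f j) = f i := by
  obtain ⟨i, hi⟩ := Finite.exists_max f
  exact ⟨i, le_antisymm (iSup_le hi) (le_iSup f i)⟩

lemma exists_iInf_eq {ι : Type*} [Finite ι] [Nonempty ι] (f : ι → EReal) :
    ∃ i, (⨅ j, f j) = f i := by
  obtain ⟨i, hi⟩ := Finite.exists_min f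
  exact ⟨i, le_antisymm (iInf_le f i) (le_iInf hi)⟩

lemma ereal_coe_add_eq_top {c : ℝ} {x : EReal} (h : ((c:ℝ):EReal) + x = ⊤) : x = ⊤ := by
  induction x using EReal.rec with
  | bot => simp at h
  | coe y => rw [← EReal.coe_add] at h; exact absurd h (EReal.coe_ne_top _)
  | top => rfl

end ERealAux

namespace Game

variable {V : Type} (g : Game V)

open scoped Classical

lemma Strategy.ext' {g : Game V} {s1 s2 : g.Strategy} (h : s1.next = s2.next) : s1 = s2 := by
  cases s1; cases s2; simp_all

noncomputable instance : Inhabited g.Strategy :=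
  ⟨⟨fun _ u => Classical.choose (g.nonempty u), fun _ u => Classical.choose_spec (g.nonempty u)⟩⟩

/-- Shift of a strategy by an initial vertex. -/
def Strategy.shiftS {g : Game V} (s : g.Strategy) (v : V) : g.Strategy where
  next h u := s.next (h ++ [v]) u
  valid h u := s.valid _ _

/-- Extension of a strategy by a prescribed first move from `v`. -/
noncomputable def Strategy.ext1 {g : Game V} (v v' : V) (hv' : g.E v v') (s : g.Strategy) :
    g.Strategy where
  next h u :=
    if h = [] then (if u = v then v' else Classical.choose (g.nonempty u))
    else s.next h.dropLast u
  valid h u := by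
    split
    · split
      · next hu => exact hu ▸ hv'
      · exact Classical.choose_spec (g.nonempty u)
    · exact s.valid _ _

lemma Strategy.ext1_shiftS {g : Game V} (v v' : V) (hv' : g.E v v') (s : g.Strategy) :
    (Strategy.ext1 v v' hv' s).shiftS v = s := by
  apply Strategy.ext'
  funext h u
  show (Strategy.ext1 v v' hv' s).next (h ++ [v]) u = s.next h u
  have hne : h ++ [v] ≠ [] := by simp
  simp only [Strategy.ext1, if_neg hne, List.dropLast_concat]

lemma Strategy.ext1_first {g : Game V} (v v' : V) (hv' : g.E v v') (s : g.Strategy) :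
    (Strategy.ext1 v v' hv' s).next [] v = v' := by
  simp [Strategy.ext1]

/-- Combination of a family of strategies, dispatching on the second vertex of the play. -/
noncomputable def Strategy.comb {g : Game V} (fam : V → g.Strategy) : g.Strategy where
  next h u :=
    if hh : h.dropLast = [] then (fam u).next [] u
    else (fam ((h.dropLast).getLast?.getD u)).next h.dropLast u
  valid h u := by
    split
    · exact (fam u).valid _ _
    · exact (fam _).valid _ _

lemma step_shiftS (σ τ : g.Strategy) (v : V) (h : List V) (u : V) :
    g.step σ τ (h ++ [v]) u = g.step (σ.shiftS v) (τ.shiftS v) h u := rfl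

lemma playAux_succ (σ τ : g.Strategy) (v : V) (k : ℕ) :
    g.playAux σ τ v (k+1) =
      ((g.playAux (σ.shiftS v) (τ.shiftS v) (g.step σ τ [] v) k).1,
       (g.playAux (σ.shiftS v) (τ.shiftS v) (g.step σ τ [] v) k).2 ++ [v]) := by
  induction k with
  | zero => rfl
  | succ k ih =>
    show (g.step σ τ (g.playAux σ τ v (k+1)).2 (g.playAux σ τ v (k+1)).1,
      (g.playAux σ τ v (k+1)).1 :: (g.playAux σ τ v (k+1)).2) = _
    rw [ih]
    rfl

lemma play_succ (σ τ : g.Strategy) (v : V) (k : ℕ) :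
    g.play σ τ v (k+1) = g.play (σ.shiftS v) (τ.shiftS v) (g.step σ τ [] v) k := by
  show (g.playAux σ τ v (k+1)).1 = _
  rw [playAux_succ]
  rfl

lemma play_zero (σ τ : g.Strategy) (v : V) : g.play σ τ v 0 = v := rfl

lemma playAux_congr (σ σ' τ τ' : g.Strategy) (v : V)
    (hσ : ∀ h u, ((h = [] ∧ u = v) ∨ h.getLast? = some v) → σ.next h u = σ'.next h u)
    (hτ : ∀ h u, ((h = [] ∧ u = v) ∨ h.getLast? = some v) → τ.next h u = τ'.next h u) :
    ∀ k, g.playAux σ τ v k = g.playAux σ' τ' v k ∧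
      (((g.playAux σ τ v k).2 = [] ∧ (g.playAux σ τ v k).1 = v)
        ∨ (g.playAux σ τ v k).2.getLast? = some v) := by
  intro k
  induction k with
  | zero => exact ⟨rfl, Or.inl ⟨rfl, rfl⟩⟩
  | succ k ih =>
    obtain ⟨heq, hinv⟩ := ih
    have hstep : g.step σ τ (g.playAux σ τ v k).2 (g.playAux σ τ v k).1
        = g.step σ' τ' (g.playAux σ τ v k).2 (g.playAux σ τ v k).1 := by
      unfold step
      split
      · exact hσ _ _ hinv
      · exact hτ _ _ hinv
    constructor
    · show (g.step σ τ (g.playAux σ τ v k).2 (g.playAux σ τ v k).1,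
        (g.playAux σ τ v k).1 :: (g.playAux σ τ v k).2) = (g.step σ' τ' (g.playAux σ' τ' v k).2
          (g.playAux σ' τ' v k).1, (g.playAux σ' τ' v k).1 :: (g.playAux σ' τ' v k).2)
      rw [← heq, hstep]
    · show ((g.playAux σ τ v k).1 :: (g.playAux σ τ v k).2 = [] ∧ _) ∨
        ((g.playAux σ τ v k).1 :: (g.playAux σ τ v k).2).getLast? = some v
      rcases hinv with ⟨h1, h2⟩ | h1
      · right; rw [h1, h2]; rfl
      · right
        rcases hl : (g.playAux σ τ v k).2 with _ | ⟨a, l⟩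
        · rw [hl] at h1; simp at h1
        · rw [hl] at h1; rw [List.getLast?_cons_cons, h1]

lemma play_congr (σ σ' τ τ' : g.Strategy) (v : V)
    (hσ : ∀ h u, ((h = [] ∧ u = v) ∨ h.getLast? = some v) → σ.next h u = σ'.next h u)
    (hτ : ∀ h u, ((h = [] ∧ u = v) ∨ h.getLast? = some v) → τ.next h u = τ'.next h u) :
    g.play σ τ v = g.play σ' τ' v := by
  funext k
  show (g.playAux σ τ v k).1 = (g.playAux σ' τ' v k).1
  rw [(g.playAux_congr σ σ' τ τ' v hσ hτ k).1]

end Game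
/-- A min-cost reachability game: a game together with a target vertex `t` whose only
outgoing edge is a self-loop of weight `0`. -/
structure MCRGame (V : Type) extends Game V where
  t : V
  loop : E t t
  loopOnly : ∀ v, E t v → v = t
  loopZero : w t t = 0

/-- The value of a (determined) MCR game. -/
noncomputable def MCRGame.Val {V : Type} (G : MCRGame V) : V → EReal :=
  fun v => G.toGame.lowerVal (G.toGame.MCR G.t) v

/-- The `i`-step value `val_i(v) = inf_τ sup_σ MCR_i(Play(v, σ, τ))`. -/
noncomputable def MCRGame.ival {V : Type} (G : MCRGame V) (i : ℕ) : V → EReal :=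
  fun v => G.toGame.upperVal (G.toGame.MCRbd G.t i) v


namespace MCRGame

variable {V : Type} (G : MCRGame V)

open scoped Classical

lemma play_target (σ τ : G.toGame.Strategy) : ∀ k, G.toGame.play σ τ G.t k = G.t := by
  intro k
  induction k with
  | zero => rfl
  | succ k ih =>
    show G.toGame.step σ τ _ (G.toGame.playAux σ τ G.t k).1 = G.t
    have h1 : (G.toGame.playAux σ τ G.t k).1 = G.t := ih
    rw [h1]
    unfold Game.step
    split
    · exact G.loopOnly _ (σ.valid _ _)
    · exact G.loopOnly _ (τ.valid _ _)

lemma MCRbd_play_target (σ τ : G.toGame.Strategy) (i : ℕ) :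
    G.toGame.MCRbd G.t i (G.toGame.play σ τ G.t) = 0 := by
  have h0 : G.toGame.play σ τ G.t 0 = G.t := rfl
  have hE : ∃ k, G.toGame.play σ τ G.t k = G.t := ⟨0, h0⟩
  have hfind : Nat.find hE = 0 := by
    rw [Nat.find_eq_zero]; exact h0
  unfold Game.MCRbd
  rw [if_pos ⟨0, Nat.zero_le i, h0⟩]
  unfold Game.MCR
  rw [dif_pos hE, hfind]
  simp [Game.TPfin]

lemma ival_target (i : ℕ) : G.ival i G.t = 0 := by
  unfold ival Game.upperVal Game.valMin
  simp only [MCRbd_play_target]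
  rw [iSup_const, iInf_const]

lemma ival_zero_ne (v : V) (hv : v ≠ G.t) : G.ival 0 v = ⊤ := by
  unfold ival Game.upperVal Game.valMin
  have h : ∀ σ τ : G.toGame.Strategy, G.toGame.MCRbd G.t 0 (G.toGame.play σ τ v) = ⊤ := by
    intro σ τ
    unfold Game.MCRbd
    rw [if_neg]
    rintro ⟨k, hk, hkt⟩
    interval_cases k
    exact hv hkt
  simp only [h]
  rw [iSup_const, iInf_const]

lemma MCRbd_antitone (t : V) (π : ℕ → V) {i j : ℕ} (hij : i ≤ j) :
    G.toGame.MCRbd t j π ≤ G.toGame.MCRbd t i π := by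
  unfold Game.MCRbd
  by_cases hi : ∃ k ≤ i, π k = t
  · obtain ⟨k, hk, hkt⟩ := hi
    rw [if_pos (⟨k, hk.trans hij, hkt⟩ : ∃ k ≤ j, π k = t),
      if_pos (⟨k, hk, hkt⟩ : ∃ k ≤ i, π k = t)]
  · rw [if_neg hi]
    exact le_top

lemma ival_antitone {i j : ℕ} (hij : i ≤ j) (v : V) : G.ival j v ≤ G.ival i v := by
  unfold ival Game.upperVal Game.valMin
  exact iInf_mono fun τ => iSup_mono fun σ => G.MCRbd_antitone _ _ hij

lemma Val_le_ival (i : ℕ) (v : V) : G.Val v ≤ G.ival i v := by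
  show G.toGame.lowerVal (G.toGame.MCR G.t) v ≤ G.toGame.upperVal (G.toGame.MCRbd G.t i) v
  unfold Game.lowerVal Game.upperVal Game.valMax Game.valMin
  refine le_trans
    (iSup_iInf_le_iInf_iSup fun σ τ => G.toGame.MCR G.t (G.toGame.play σ τ v)) ?_
  refine iInf_mono fun τ => iSup_mono fun σ => ?_
  unfold Game.MCRbd
  split
  · exact le_refl _
  · exact le_top

lemma MCRbd_shift (σ τ : G.toGame.Strategy) (v : V) (hv : v ≠ G.t) (i : ℕ) :
    G.toGame.MCRbd G.t (i+1) (G.toGame.play σ τ v)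
      = ((G.toGame.w v (G.toGame.step σ τ [] v) : ℝ) : EReal)
        + G.toGame.MCRbd G.t i
            (G.toGame.play (σ.shiftS v) (τ.shiftS v) (G.toGame.step σ τ [] v)) := by
  set v1 := G.toGame.step σ τ [] v with hv1
  have hπ0 : G.toGame.play σ τ v 0 = v := rfl
  have hπs : ∀ k, G.toGame.play σ τ v (k+1)
      = G.toGame.play (σ.shiftS v) (τ.shiftS v) v1 k := fun k => G.toGame.play_succ σ τ v k
  have hπ'0 : G.toGame.play (σ.shiftS v) (τ.shiftS v) v1 0 = v1 := rfl
  have hTP : ∀ m, G.toGame.TPfin (G.toGame.play σ τ v) (m+1)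
      = G.toGame.w v v1 + G.toGame.TPfin (G.toGame.play (σ.shiftS v) (τ.shiftS v) v1) m := by
    intro m
    unfold Game.TPfin
    rw [Finset.sum_range_succ']
    have : ∀ k, G.toGame.w (G.toGame.play σ τ v (k+1)) (G.toGame.play σ τ v (k+1+1))
        = G.toGame.w (G.toGame.play (σ.shiftS v) (τ.shiftS v) v1 k)
            (G.toGame.play (σ.shiftS v) (τ.shiftS v) v1 (k+1)) := by
      intro k; rw [hπs, hπs]
    simp only [this, hπ0, hπs 0, hπ'0]
    ring
  by_cases hr : ∃ k ≤ i, G.toGame.play (σ.shiftS v) (τ.shiftS v) v1 k = G.t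
  · obtain ⟨k0, hk0, hk0t⟩ := hr
    have hr2 : ∃ k ≤ i+1, G.toGame.play σ τ v k = G.t :=
      ⟨k0+1, Nat.succ_le_succ hk0, by rw [hπs]; exact hk0t⟩
    unfold Game.MCRbd
    rw [if_pos hr2, if_pos ⟨k0, hk0, hk0t⟩]
    have hE : ∃ k, G.toGame.play σ τ v k = G.t := ⟨k0+1, by rw [hπs]; exact hk0t⟩
    have hE' : ∃ k, G.toGame.play (σ.shiftS v) (τ.shiftS v) v1 k = G.t := ⟨k0, hk0t⟩
    have hfind : Nat.find hE = Nat.find hE' + 1 := by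
      rw [Nat.find_eq_iff]
      constructor
      · rw [hπs]; exact Nat.find_spec hE'
      · intro m hm
        match m with
        | 0 => exact hv
        | m+1 =>
          rw [hπs]
          exact Nat.find_min hE' (Nat.lt_of_succ_lt_succ hm)
    unfold Game.MCR
    rw [dif_pos hE, dif_pos hE', hfind, hTP]
    push_cast
    ring
  · have hr2 : ¬ ∃ k ≤ i+1, G.toGame.play σ τ v k = G.t := by
      rintro ⟨k, hk, hkt⟩
      match k with
      | 0 => exact hv hkt
      | k+1 =>
        rw [hπs] at hkt
        exact hr ⟨k, Nat.lt_succ_iff.mp hk, hkt⟩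
    unfold Game.MCRbd
    rw [if_neg hr2, if_neg hr]
    exact (EReal.coe_add_top _).symm

end MCRGame

namespace Game

open scoped Classical

instance succ_nonempty {V : Type} (g : Game V) (v : V) : Nonempty {u // g.E v u} :=
  ⟨⟨_, Classical.choose_spec (g.nonempty v)⟩⟩

lemma Strategy.comb_next {V : Type} {g : Game V} (fam : V → g.Strategy) (h : List V) (u : V) :
    (Strategy.comb fam).next h u
      = if hh : h.dropLast = [] then (fam u).next [] u
        else (fam ((h.dropLast).getLast?.getD u)).next h.dropLast u := rfl

end Game

open scoped Classical in
/-- The one-step (Bellman) operator of a min-cost reachability game. -/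
noncomputable def MCRGame.Fop {V : Type} (G : MCRGame V) (f : V → EReal) (v : V) : EReal :=
  if v = G.t then 0
  else if G.owner v then ⨆ p : {u // G.toGame.E v u}, (((G.toGame.w v p.1 : ℝ) : EReal) + f p.1)
  else ⨅ p : {u // G.toGame.E v u}, (((G.toGame.w v p.1 : ℝ) : EReal) + f p.1)

namespace MCRGame

variable {V : Type} (G : MCRGame V)

open scoped Classical

lemma ival_def (i : ℕ) (v : V) : G.ival i v
    = ⨅ τ : G.toGame.Strategy, ⨆ σ : G.toGame.Strategy,
        G.toGame.MCRbd G.t i (G.toGame.play σ τ v) := rfl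

theorem ival_succ_eq (i : ℕ) (v : V) : G.ival (i+1) v = G.Fop (G.ival i) v := by
  by_cases hvt : v = G.t
  · subst hvt
    rw [ival_target, Fop, if_pos rfl]
  · rw [Fop, if_neg hvt]
    rcases howner : G.owner v with _ | _
    · -- Min vertex
      rw [if_neg (by simp [howner])]
      apply le_antisymm
      · apply le_iInf
        intro p
        rw [G.ival_def i p.1, ereal_add_iInf]
        apply le_iInf
        intro τ'
        rw [G.ival_def (i+1) v]
        refine le_trans (iInf_le _ (Game.Strategy.ext1 v p.1 p.2 τ')) ?_
        apply iSup_le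
        intro σ
        rw [G.MCRbd_shift σ _ v hvt i]
        have hstep : G.toGame.step σ (Game.Strategy.ext1 v p.1 p.2 τ') [] v = p.1 := by
          unfold Game.step
          rw [howner]
          simp only [Bool.false_eq_true, if_false]
          exact Game.Strategy.ext1_first v p.1 p.2 τ'
        rw [hstep, Game.Strategy.ext1_shiftS]
        exact add_le_add_right
          (le_iSup (fun σ' => G.toGame.MCRbd G.t i (G.toGame.play σ' τ' p.1)) (σ.shiftS v)) _
      · rw [G.ival_def (i+1) v]
        apply le_iInf
        intro τ
        set p : {u // G.toGame.E v u} := ⟨τ.next [] v, τ.valid [] v⟩ with hp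
        refine le_trans (iInf_le _ p) ?_
        have h1 : G.ival i p.1 ≤ ⨆ σ', G.toGame.MCRbd G.t i
            (G.toGame.play σ' (τ.shiftS v) p.1) := by
          rw [G.ival_def i p.1]
          exact iInf_le _ (τ.shiftS v)
        refine le_trans (add_le_add_right h1 _) ?_
        rw [ereal_add_iSup]
        apply iSup_le
        intro σ'
        have hstep : G.toGame.step (Game.Strategy.ext1 v p.1 p.2 σ') τ [] v = p.1 := by
          unfold Game.step
          rw [howner]
          simp
          rfl
        calc ((G.toGame.w v p.1 : ℝ) : EReal)
              + G.toGame.MCRbd G.t i (G.toGame.play σ' (τ.shiftS v) p.1)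
            = G.toGame.MCRbd G.t (i+1)
                (G.toGame.play (Game.Strategy.ext1 v p.1 p.2 σ') τ v) := by
              rw [G.MCRbd_shift _ τ v hvt i, hstep, Game.Strategy.ext1_shiftS]
          _ ≤ ⨆ σ, G.toGame.MCRbd G.t (i+1) (G.toGame.play σ τ v) :=
              le_iSup (fun σ => G.toGame.MCRbd G.t (i+1) (G.toGame.play σ τ v)) _
    · -- Max vertex
      rw [if_pos rfl]
      apply le_antisymm
      · apply ereal_le_of_forall_lt_le
        intro c hc
        have hch : ∀ p : {u // G.toGame.E v u}, ∃ τ' : G.toGame.Strategy,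
            ((G.toGame.w v p.1 : ℝ) : EReal)
              + ⨆ σ', G.toGame.MCRbd G.t i (G.toGame.play σ' τ' p.1) < c := by
          intro p
          have h1 : ((G.toGame.w v p.1 : ℝ) : EReal) + G.ival i p.1 < c :=
            lt_of_le_of_lt (le_iSup (fun q : {u // G.toGame.E v u} =>
              ((G.toGame.w v q.1 : ℝ) : EReal) + G.ival i q.1) p) hc
          rw [G.ival_def i p.1, ereal_add_iInf] at h1
          exact iInf_lt_iff.mp h1
        choose fam hfam using hch
        set fam' : V → G.toGame.Strategy :=
          fun u => if h : G.toGame.E v u then fam ⟨u, h⟩ else default with hfam'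
        rw [G.ival_def (i+1) v]
        refine le_trans (iInf_le _ (Game.Strategy.comb fam')) ?_
        apply iSup_le
        intro σ
        rw [G.MCRbd_shift σ _ v hvt i]
        set v1 := G.toGame.step σ (Game.Strategy.comb fam') [] v with hv1
        have hE1 : G.toGame.E v v1 := by
          rw [hv1]
          unfold Game.step
          rw [howner]
          simp only [reduceIte]
          exact σ.valid [] v
        have hplay : G.toGame.play (σ.shiftS v) ((Game.Strategy.comb fam').shiftS v) v1
            = G.toGame.play (σ.shiftS v) (fam' v1) v1 := by
          apply Game.play_congr
          · intro h u _
            rfl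
          · intro h u hinv
            show (Game.Strategy.comb fam').next (h ++ [v]) u = (fam' v1).next h u
            rw [Game.Strategy.comb_next]
            simp only [List.dropLast_concat]
            rcases hinv with ⟨h1, h2⟩ | h1
            · subst h1
              subst h2
              rw [dif_pos rfl]
            · have hne : h ≠ [] := by rintro rfl; simp at h1
              rw [dif_neg hne, h1]
              simp
        rw [hplay]
        have hfv : fam' v1 = fam ⟨v1, hE1⟩ := by
          show (if h : G.toGame.E v v1 then fam ⟨v1, h⟩ else default) = fam ⟨v1, hE1⟩
          rw [dif_pos hE1]
        rw [hfv]
        refine le_trans (add_le_add_right (le_iSup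
          (fun σ' => G.toGame.MCRbd G.t i (G.toGame.play σ' (fam ⟨v1, hE1⟩) v1))
          (σ.shiftS v)) _) ?_
        exact le_of_lt (hfam ⟨v1, hE1⟩)
      · apply iSup_le
        intro p
        rw [G.ival_def (i+1) v]
        apply le_iInf
        intro τ
        have h1 : G.ival i p.1 ≤ ⨆ σ', G.toGame.MCRbd G.t i
            (G.toGame.play σ' (τ.shiftS v) p.1) := by
          rw [G.ival_def i p.1]
          exact iInf_le _ (τ.shiftS v)
        refine le_trans (add_le_add_right h1 _) ?_
        rw [ereal_add_iSup]
        apply iSup_le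
        intro σ'
        have hstep : G.toGame.step (Game.Strategy.ext1 v p.1 p.2 σ') τ [] v = p.1 := by
          unfold Game.step
          rw [howner]
          simp only [reduceIte]
          exact Game.Strategy.ext1_first v p.1 p.2 σ'
        calc ((G.toGame.w v p.1 : ℝ) : EReal)
              + G.toGame.MCRbd G.t i (G.toGame.play σ' (τ.shiftS v) p.1)
            = G.toGame.MCRbd G.t (i+1)
                (G.toGame.play (Game.Strategy.ext1 v p.1 p.2 σ') τ v) := by
              rw [G.MCRbd_shift _ τ v hvt i, hstep, Game.Strategy.ext1_shiftS]
          _ ≤ ⨆ σ, G.toGame.MCRbd G.t (i+1) (G.toGame.play σ τ v) :=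
              le_iSup (fun σ => G.toGame.MCRbd G.t (i+1) (G.toGame.play σ τ v)) _

end MCRGame

namespace MCRGame

variable {V : Type} (G : MCRGame V)

open scoped Classical

lemma Fop_mono {f g : V → EReal} (hfg : ∀ u, f u ≤ g u) (v : V) :
    G.Fop f v ≤ G.Fop g v := by
  unfold Fop
  split
  · exact le_refl _
  · split
    · exact iSup_mono fun p => add_le_add_right (hfg p.1) _
    · exact iInf_mono fun p => add_le_add_right (hfg p.1) _

lemma ival_stab {j : ℕ} (hj : G.ival (j+1) = G.ival j) :
    ∀ i, j ≤ i → G.ival i = G.ival j := by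
  intro i hi
  induction i, hi using Nat.le_induction with
  | base => rfl
  | succ i hji ih =>
    funext v
    rw [G.ival_succ_eq i v, ih, ← G.ival_succ_eq j v]
    rw [hj]

variable [Fintype V]

lemma ival_int : ∀ (i : ℕ) (v : V),
    G.ival i v = ⊤ ∨ ∃ m : ℤ, G.ival i v = ((m : ℝ) : EReal) := by
  intro i
  induction i with
  | zero =>
    intro v
    by_cases hv : v = G.t
    · subst hv
      right
      exact ⟨0, by rw [ival_target]; simp⟩
    · left
      exact G.ival_zero_ne v hv
  | succ i ih =>
    intro v
    rw [ival_succ_eq]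
    unfold Fop
    split
    · right; exact ⟨0, by simp⟩
    · split
      · obtain ⟨p0, hp0⟩ := exists_iSup_eq
          (fun p : {u // G.toGame.E v u} => ((G.toGame.w v p.1 : ℝ) : EReal) + G.ival i p.1)
        rw [hp0]
        rcases ih p0.1 with htop | ⟨m, hm⟩
        · left; rw [htop]; exact EReal.coe_add_top _
        · right
          exact ⟨G.toGame.w v p0.1 + m, by rw [hm, ← EReal.coe_add]; norm_cast⟩
      · obtain ⟨p0, hp0⟩ := exists_iInf_eq
          (fun p : {u // G.toGame.E v u} => ((G.toGame.w v p.1 : ℝ) : EReal) + G.ival i p.1)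
        rw [hp0]
        rcases ih p0.1 with htop | ⟨m, hm⟩
        · left; rw [htop]; exact EReal.coe_add_top _
        · right
          exact ⟨G.toGame.w v p0.1 + m, by rw [hm, ← EReal.coe_add]; norm_cast⟩

lemma ival_upper {W : ℕ} (hW : ∀ v v', G.toGame.E v v' → |G.toGame.w v v'| ≤ (W : ℤ)) :
    ∀ (i : ℕ) (v : V), G.ival i v = ⊤ ∨ G.ival i v ≤ (((i * W : ℤ) : ℝ) : EReal) := by
  intro i
  induction i with
  | zero =>
    intro v
    by_cases hv : v = G.t
    · subst hv
      right
      rw [ival_target]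
      simp
    · left
      exact G.ival_zero_ne v hv
  | succ i ih =>
    have hwle : ∀ v (p : {u // G.toGame.E v u}),
        ((G.toGame.w v p.1 : ℝ) : EReal) ≤ (((W : ℤ) : ℝ) : EReal) := by
      intro v p
      rw [EReal.coe_le_coe_iff]
      exact_mod_cast le_of_abs_le (hW v p.1 p.2)
    intro v
    rw [ival_succ_eq]
    unfold Fop
    split
    · right
      rw [show ((0:EReal) = (((0:ℝ)):EReal)) by simp, EReal.coe_le_coe_iff]
      positivity
    · split
      · by_cases hex : ∃ p : {u // G.toGame.E v u}, G.ival i p.1 = ⊤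
        · left
          obtain ⟨p, hp⟩ := hex
          refine top_unique (le_trans ?_ (le_iSup
            (fun p : {u // G.toGame.E v u} => ((G.toGame.w v p.1 : ℝ) : EReal) + G.ival i p.1) p))
          rw [hp, EReal.coe_add_top]
        · right
          push_neg at hex
          apply iSup_le
          intro p
          rcases ih p.1 with htop | hle
          · exact absurd htop (hex p)
          · refine le_trans (add_le_add (hwle v p) hle) (le_of_eq ?_)
            rw [← EReal.coe_add]
            norm_cast
            push_cast
            ring
      · by_cases hall : ∀ p : {u // G.toGame.E v u}, G.ival i p.1 = ⊤
        · left
          rw [iInf_eq_top]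
          intro p
          rw [hall p, EReal.coe_add_top]
        · right
          push_neg at hall
          obtain ⟨p, hp⟩ := hall
          rcases ih p.1 with htop | hle
          · exact absurd htop hp
          · refine le_trans (iInf_le
              (fun p : {u // G.toGame.E v u} => ((G.toGame.w v p.1 : ℝ) : EReal) + G.ival i p.1) p) ?_
            refine le_trans (add_le_add (hwle v p) hle) (le_of_eq ?_)
            rw [← EReal.coe_add]
            norm_cast
            push_cast
            ring

end MCRGame

namespace MCRGame

variable {V : Type} (G : MCRGame V) [Fintype V]

open scoped Classical

lemma ival_ne_top_of_ge (hfin : ∀ v : V, ∃ m : ℤ, G.Val v = ((m : ℝ) : EReal)) :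
    ∀ j v, Fintype.card V ≤ j → G.ival j v ≠ ⊤ := by
  classical
  set n := Fintype.card V with hn
  set S : ℕ → Finset V := fun i => Finset.univ.filter (fun v => G.ival i v = ⊤) with hS
  have hmem : ∀ i u, u ∈ S i ↔ G.ival i u = ⊤ := by intro i u; simp [hS]
  have hmono : ∀ i j, i ≤ j → S j ⊆ S i := by
    intro i j hij u hu
    rw [hmem] at hu ⊢
    have h1 := G.ival_antitone hij u
    rw [hu] at h1
    exact top_unique h1
  have htnotin : ∀ i, G.t ∉ S i := by
    intro i h
    rw [hmem, ival_target] at h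
    exact (by simp : (0:EReal) ≠ ⊤) h
  obtain ⟨i, hilt, hieq⟩ : ∃ i, i < n ∧ S (i+1) = S i := by
    by_contra hcon
    push_neg at hcon
    have hstrict : ∀ k, k ≤ n → (S k).card + k ≤ (S 0).card := by
      intro k hk
      induction k with
      | zero => simp
      | succ k ih =>
        have h1 := ih (le_of_lt (Nat.lt_of_succ_le hk))
        have h2 : (S (k+1)).card < (S k).card :=
          Finset.card_lt_card
            (ssubset_of_subset_of_ne (hmono k (k+1) (Nat.le_succ k))
              (hcon k (Nat.lt_of_succ_le hk)))
        omega
    have hcard0 : (S 0).card ≤ n - 1 := by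
      have hsub : S 0 ⊆ Finset.univ.erase G.t := by
        intro v hv
        exact Finset.mem_erase.mpr ⟨fun h => htnotin 0 (h ▸ hv), Finset.mem_univ v⟩
      calc (S 0).card ≤ (Finset.univ.erase G.t).card := Finset.card_le_card hsub
        _ = n - 1 := by rw [Finset.card_erase_of_mem (Finset.mem_univ _), Finset.card_univ]
    have hn1 : 1 ≤ n := Fintype.card_pos_iff.mpr ⟨G.t⟩
    have := hstrict n (le_refl n)
    omega
  have hSempty : S i = ∅ := by
    by_contra hne
    obtain ⟨v0, hv0⟩ := Finset.nonempty_iff_ne_empty.mpr hne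
    have htrap : ∀ u, u ∈ S i → (u ≠ G.t) ∧
        ((G.owner u = true → ∃ u', G.toGame.E u u' ∧ G.ival i u' = ⊤) ∧
         (G.owner u = false → ∀ u', G.toGame.E u u' → G.ival i u' = ⊤)) := by
      intro u hu
      have hu1 : G.ival (i+1) u = ⊤ := by
        rw [← hmem]
        exact hieq ▸ hu
      rw [G.ival_succ_eq] at hu1
      unfold Fop at hu1
      by_cases hut : u = G.t
      · rw [if_pos hut] at hu1
        exact absurd hu1 (by simp)
      · rw [if_neg hut] at hu1
        refine ⟨hut, ?_, ?_⟩
        · intro how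
          rw [if_pos how] at hu1
          obtain ⟨p0, hp0⟩ := exists_iSup_eq
            (fun p : {u' // G.toGame.E u u'} => ((G.toGame.w u p.1 : ℝ) : EReal) + G.ival i p.1)
          rw [hp0] at hu1
          exact ⟨p0.1, p0.2, ereal_coe_add_eq_top hu1⟩
        · intro how
          rw [if_neg (by simp [how])] at hu1
          rw [iInf_eq_top] at hu1
          intro u' hE
          exact ereal_coe_add_eq_top (hu1 ⟨u', hE⟩)
    set σt : G.toGame.Strategy :=
      ⟨fun _ u => if hu : ∃ u', G.toGame.E u u' ∧ G.ival i u' = ⊤ then Classical.choose hu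
          else Classical.choose (G.toGame.nonempty u), by
        intro h u
        split
        · next hu => exact (Classical.choose_spec hu).1
        · next => exact Classical.choose_spec (G.toGame.nonempty u)⟩ with hσt
    have hstay : ∀ (τ : G.toGame.Strategy) k, G.ival i (G.toGame.play σt τ v0 k) = ⊤ := by
      intro τ k
      induction k with
      | zero => exact (hmem i v0).mp hv0
      | succ k ih =>
        show G.ival i (G.toGame.step σt τ (G.toGame.playAux σt τ v0 k).2
          (G.toGame.playAux σt τ v0 k).1) = ⊤
        set u := (G.toGame.playAux σt τ v0 k).1 with hu
        have humem : u ∈ S i := (hmem i u).mpr ih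
        unfold Game.step
        rcases how : G.owner u with _ | _
        · simp only [Bool.false_eq_true, if_false]
          exact ((htrap u humem).2.2 how) _ (τ.valid _ u)
        · rw [if_pos rfl]
          have hex := (htrap u humem).2.1 how
          show G.ival i (if hu' : ∃ u', G.toGame.E u u' ∧ G.ival i u' = ⊤ then
            Classical.choose hu' else Classical.choose (G.toGame.nonempty u)) = ⊤
          rw [dif_pos hex]
          exact (Classical.choose_spec hex).2
    have hnever : ∀ (τ : G.toGame.Strategy) k, G.toGame.play σt τ v0 k ≠ G.t := by
      intro τ k h
      have h2 := hstay τ k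
      rw [h, ival_target] at h2
      exact (by simp : (0:EReal) ≠ ⊤) h2
    have hval : G.Val v0 = ⊤ := by
      refine top_unique ?_
      show (⊤:EReal) ≤ G.toGame.lowerVal (G.toGame.MCR G.t) v0
      unfold Game.lowerVal Game.valMax
      refine le_iSup_of_le σt (le_iInf fun τ => ?_)
      unfold Game.MCR
      rw [dif_neg]
      rintro ⟨k, hk⟩
      exact hnever τ k hk
    obtain ⟨m, hm⟩ := hfin v0
    rw [hval] at hm
    exact (EReal.coe_ne_top m) hm.symm
  intro j v hj htop
  have hvin : v ∈ S j := (hmem j v).mpr htop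
  have := hmono i j (le_trans (le_of_lt hilt) hj) hvin
  rw [hSempty] at this
  exact absurd this (Finset.notMem_empty v)

end MCRGame

lemma int_antitone_stab_aux : ∀ (N : ℕ) (a : ℕ → ℤ) (m : ℤ), (∀ i, a (i+1) ≤ a i) →
    (∀ i, m ≤ a i) → (a 0 - m).toNat ≤ N → ∃ i, ∀ j, i ≤ j → a j = a i := by
  intro N
  induction N with
  | zero =>
    intro a m ha hm h0
    refine ⟨0, fun j _ => ?_⟩
    have hmono : a j ≤ a 0 := antitone_nat_of_succ_le ha (Nat.zero_le j)
    have h1 := hm j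
    have h2 := hm 0
    omega
  | succ N ih =>
    intro a m ha hm h0
    by_cases hall : ∀ j, a j = a 0
    · exact ⟨0, fun j _ => hall j⟩
    · push_neg at hall
      obtain ⟨j0, hj0⟩ := hall
      have hmono : ∀ i j : ℕ, i ≤ j → a j ≤ a i := fun i j h => antitone_nat_of_succ_le ha h
      have hlt : a j0 < a 0 := lt_of_le_of_ne (hmono 0 j0 (Nat.zero_le _)) hj0
      obtain ⟨i, hi⟩ := ih (fun k => a (j0 + k)) m (fun k => ha _) (fun k => hm _) (by
        show (a (j0 + 0) - m).toNat ≤ N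
        have h1 := hm j0
        have h2 : j0 + 0 = j0 := rfl
        rw [h2]
        omega)
      refine ⟨j0 + i, fun j hj => ?_⟩
      have h2 := hi (j - j0) (by omega)
      have h3 : j0 + (j - j0) = j := by omega
      rw [h3] at h2
      exact h2

/-- Reachability of the target within `k` steps along "tight" edges of `fz`. -/
def MCRGame.EqReach {V : Type} (G : MCRGame V) (fz : V → ℤ) : ℕ → V → Prop
  | 0, v => v = G.t
  | (k+1), v => MCRGame.EqReach G fz k v ∨
      ∃ v', (G.toGame.E v v' ∧ fz v = G.toGame.w v v' + fz v') ∧ MCRGame.EqReach G fz k v'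

open scoped Classical in
/-- An integer representative of `ival`. -/
noncomputable def MCRGame.zval {V : Type} (G : MCRGame V) (j : ℕ) (v : V) : ℤ :=
  if h : ∃ m : ℤ, G.ival j v = ((m : ℝ) : EReal) then Classical.choose h else 0

namespace MCRGame

variable {V : Type} (G : MCRGame V) [Fintype V]

open scoped Classical

lemma EqReach_le {fz : V → ℤ} : ∀ {k l : ℕ}, k ≤ l → ∀ v, G.EqReach fz k v → G.EqReach fz l v := by
  intro k l hkl
  induction l, hkl using Nat.le_induction with
  | base => exact fun v h => h
  | succ l hkl ih => exact fun v h => Or.inl (ih v h)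

lemma zval_spec (hfin : ∀ v : V, ∃ m : ℤ, G.Val v = ((m : ℝ) : EReal)) (j : ℕ) (v : V)
    (hj : Fintype.card V ≤ j) : G.ival j v = ((G.zval j v : ℝ) : EReal) := by
  rcases G.ival_int j v with htop | hex
  · exact absurd htop (G.ival_ne_top_of_ge hfin j v hj)
  · unfold zval
    rw [dif_pos hex]
    exact Classical.choose_spec hex

lemma exists_stab (hfin : ∀ v : V, ∃ m : ℤ, G.Val v = ((m : ℝ) : EReal)) :
    ∃ J, Fintype.card V ≤ J ∧ G.ival (J+1) = G.ival J := by
  classical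
  set n := Fintype.card V with hn
  have hspec : ∀ j v, n ≤ j → G.ival j v = ((G.zval j v : ℝ) : EReal) :=
    fun j v hj => G.zval_spec hfin j v hj
  have hanti : ∀ (v : V) k, G.zval (n+k+1) v ≤ G.zval (n+k) v := by
    intro v k
    have h1 := G.ival_antitone (Nat.le_succ (n+k)) v
    rw [hspec (n+k) v (by omega), hspec (n+k+1) v (by omega)] at h1
    exact_mod_cast h1
  have hlow : ∀ (v : V) k, (Classical.choose (hfin v)) ≤ G.zval (n+k) v := by
    intro v k
    have h1 := G.Val_le_ival (n+k) v
    rw [Classical.choose_spec (hfin v), hspec (n+k) v (by omega)] at h1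
    exact_mod_cast h1
  have hstab : ∀ v : V, ∃ i, ∀ j, i ≤ j → G.zval (n+j) v = G.zval (n+i) v := by
    intro v
    exact int_antitone_stab_aux ((G.zval (n+0) v - Classical.choose (hfin v)).toNat)
      (fun k => G.zval (n+k) v) (Classical.choose (hfin v)) (hanti v) (hlow v) (le_refl _)
  choose idx hidx using hstab
  set M := Finset.univ.sup idx with hM
  refine ⟨n + M, by omega, ?_⟩
  funext v
  have hle : idx v ≤ M := Finset.le_sup (Finset.mem_univ v)
  have hv1 := hidx v M hle
  have hv2 := hidx v (M+1) (le_trans hle (Nat.le_succ M))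
  rw [hspec (n+M) v (by omega), show n + M + 1 = n + (M+1) by omega,
    hspec (n+(M+1)) v (by omega), hv1, hv2]

lemma ival_lower {W : ℕ} (hW : ∀ v v', G.toGame.E v v' → |G.toGame.w v v'| ≤ (W : ℤ))
    (hfin : ∀ v : V, ∃ m : ℤ, G.Val v = ((m : ℝ) : EReal)) :
    ∀ (i : ℕ) (v : V),
      (((-(((Fintype.card V - 1 : ℕ) : ℤ) * (W:ℤ)) : ℤ) : ℝ) : EReal) ≤ G.ival i v := by
  classical
  obtain ⟨J, hJn, hJ⟩ := G.exists_stab hfin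
  have hstab := G.ival_stab hJ
  set fz : V → ℤ := fun v => G.zval J v with hfzdef
  have hcoe : ∀ v, G.ival J v = ((fz v : ℝ) : EReal) := fun v => G.zval_spec hfin J v hJn
  have hfix : ∀ v, G.Fop (G.ival J) v = G.ival J v := by
    intro v
    rw [← G.ival_succ_eq J v]
    exact congrFun hJ v
  have hfzt : fz G.t = 0 := by
    have h1 := hcoe G.t
    rw [ival_target] at h1
    have h2 := h1.symm
    exact_mod_cast h2
  have hMax : ∀ v, v ≠ G.t → G.owner v = true →
      (∀ v', G.toGame.E v v' → G.toGame.w v v' + fz v' ≤ fz v) ∧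
      (∃ v', G.toGame.E v v' ∧ fz v = G.toGame.w v v' + fz v') := by
    intro v hvt how
    have h1 := hfix v
    rw [Fop, if_neg hvt, if_pos how] at h1
    constructor
    · intro v' hE
      have h2 : ((G.toGame.w v v' : ℝ) : EReal) + G.ival J v' ≤ G.ival J v := by
        rw [← h1]
        exact le_iSup (fun p : {u // G.toGame.E v u} =>
          ((G.toGame.w v p.1 : ℝ) : EReal) + G.ival J p.1) ⟨v', hE⟩
      rw [hcoe v, hcoe v', ← EReal.coe_add] at h2
      exact_mod_cast h2
    · obtain ⟨p0, hp0⟩ := exists_iSup_eq (fun p : {u // G.toGame.E v u} =>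
        ((G.toGame.w v p.1 : ℝ) : EReal) + G.ival J p.1)
      have h2 : G.ival J v = ((G.toGame.w v p0.1 : ℝ) : EReal) + G.ival J p0.1 := by
        rw [← h1, hp0]
      rw [hcoe v, hcoe p0.1, ← EReal.coe_add] at h2
      exact ⟨p0.1, p0.2, by exact_mod_cast h2⟩
  have hMin : ∀ v, v ≠ G.t → G.owner v = false →
      (∀ v', G.toGame.E v v' → fz v ≤ G.toGame.w v v' + fz v') ∧
      (∃ v', G.toGame.E v v' ∧ fz v = G.toGame.w v v' + fz v') := by
    intro v hvt how
    have h1 := hfix v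
    rw [Fop, if_neg hvt, if_neg (by simp [how])] at h1
    constructor
    · intro v' hE
      have h2 : G.ival J v ≤ ((G.toGame.w v v' : ℝ) : EReal) + G.ival J v' := by
        rw [← h1]
        exact iInf_le (fun p : {u // G.toGame.E v u} =>
          ((G.toGame.w v p.1 : ℝ) : EReal) + G.ival J p.1) ⟨v', hE⟩
      rw [hcoe v, hcoe v', ← EReal.coe_add] at h2
      exact_mod_cast h2
    · obtain ⟨p0, hp0⟩ := exists_iInf_eq (fun p : {u // G.toGame.E v u} =>
        ((G.toGame.w v p.1 : ℝ) : EReal) + G.ival J p.1)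
      have h2 : G.ival J v = ((G.toGame.w v p0.1 : ℝ) : EReal) + G.ival J p0.1 := by
        rw [← h1, hp0]
      rw [hcoe v, hcoe p0.1, ← EReal.coe_add] at h2
      exact ⟨p0.1, p0.2, by exact_mod_cast h2⟩
  set n := Fintype.card V with hn
  have hn1 : 1 ≤ n := Fintype.card_pos_iff.mpr ⟨G.t⟩
  set C : ℕ → Finset V := fun k => Finset.univ.filter (fun v => G.EqReach fz k v) with hC
  have hCmem : ∀ k v, v ∈ C k ↔ G.EqReach fz k v := by intro k v; simp [hC]
  obtain ⟨K, hKlt, hKeq⟩ : ∃ K, K < n ∧ C (K+1) = C K := by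
    by_contra hcon
    push_neg at hcon
    have hgrow : ∀ k, k ≤ n → k + 1 ≤ (C k).card := by
      intro k hk
      induction k with
      | zero =>
        refine Finset.card_pos.mpr ⟨G.t, ?_⟩
        rw [hCmem]
        rfl
      | succ k ih =>
        have h1 := ih (by omega)
        have hsub : C k ⊆ C (k+1) := fun v hv => by
          rw [hCmem] at hv ⊢
          exact Or.inl hv
        have h2 : (C k).card < (C (k+1)).card :=
          Finset.card_lt_card (ssubset_of_subset_of_ne hsub (Ne.symm (hcon k (by omega))))
        omega
    have h3 := hgrow n (le_refl n)
    have h4 : (C n).card ≤ n := by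
      rw [hn]
      rw [← Finset.card_univ]
      exact Finset.card_le_card (Finset.subset_univ _)
    omega
  have hKstab : ∀ j, K ≤ j → ∀ v, G.EqReach fz j v → G.EqReach fz K v := by
    intro j hj
    induction j, hj using Nat.le_induction with
    | base => exact fun v h => h
    | succ j hKj ih =>
      intro v hv
      rcases hv with h | ⟨v', hedge, hv'⟩
      · exact ih v h
      · have h1 : G.EqReach fz K v' := ih v' hv'
        have h2 : G.EqReach fz (K+1) v := Or.inr ⟨v', hedge, h1⟩
        have h3 : v ∈ C (K+1) := (hCmem (K+1) v).mpr h2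
        rw [hKeq] at h3
        exact (hCmem K v).mp h3
  have hall : ∀ v, G.EqReach fz K v := by
    by_contra hcon
    push_neg at hcon
    obtain ⟨u0, hu0⟩ := hcon
    set hfun : V → EReal :=
      fun v => (((fz v + if G.EqReach fz K v then 0 else 1 : ℤ) : ℝ) : EReal) with hhdef
    have hfh : ∀ v, ((fz v : ℝ) : EReal) ≤ hfun v := by
      intro v
      rw [hhdef, EReal.coe_le_coe_iff]
      have : fz v ≤ fz v + if G.EqReach fz K v then 0 else 1 := by split <;> omega
      exact_mod_cast this
    have hclosed : ∀ v v', ¬ G.EqReach fz K v →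
        (G.toGame.E v v' ∧ fz v = G.toGame.w v v' + fz v') → ¬ G.EqReach fz K v' := by
      intro v v' hv hedge hv'
      exact hv (hKstab (K+1) (Nat.le_succ K) v (Or.inr ⟨v', hedge, hv'⟩))
    have hreacht : G.EqReach fz K G.t := G.EqReach_le (Nat.zero_le K) G.t rfl
    have hFh : ∀ v, hfun v ≤ G.Fop hfun v := by
      intro v
      by_cases hvt : v = G.t
      · subst hvt
        rw [Fop, if_pos rfl, hhdef]
        simp only [if_pos hreacht, hfzt]
        norm_num
      · by_cases hvr : G.EqReach fz K v
        · have h1 : hfun v = G.ival J v := by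
            rw [hhdef, hcoe v]
            simp [hvr]
          rw [h1, ← hfix v]
          exact G.Fop_mono (fun u => by rw [hcoe u]; exact hfh u) v
        · rcases how : G.owner v with _ | _
          · rw [Fop, if_neg hvt, if_neg (by simp [how])]
            apply le_iInf
            intro p
            obtain ⟨hles, -⟩ := hMin v hvt how
            have hb : (0:ℤ) ≤ if G.EqReach fz K p.1 then 0 else 1 := by split <;> omega
            by_cases heq : fz v = G.toGame.w v p.1 + fz p.1
            · have hnr : ¬ G.EqReach fz K p.1 := hclosed v p.1 hvr ⟨p.2, heq⟩
              rw [hhdef]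
              simp only [if_neg hvr, if_neg hnr]
              rw [← EReal.coe_add, EReal.coe_le_coe_iff]
              have : fz v + 1 ≤ G.toGame.w v p.1 + (fz p.1 + 1) := by omega
              exact_mod_cast this
            · have hlt : fz v + 1 ≤ G.toGame.w v p.1 + fz p.1 := by
                have := hles p.1 p.2
                omega
              rw [hhdef]
              simp only [if_neg hvr]
              rw [← EReal.coe_add, EReal.coe_le_coe_iff]
              have : fz v + 1 ≤ G.toGame.w v p.1 +
                  (fz p.1 + if G.EqReach fz K p.1 then 0 else 1) := by omega
              exact_mod_cast this
          · rw [Fop, if_neg hvt, if_pos how]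
            obtain ⟨-, v', hE, heq⟩ := hMax v hvt how
            have hnr : ¬ G.EqReach fz K v' := hclosed v v' hvr ⟨hE, heq⟩
            refine le_iSup_of_le ⟨v', hE⟩ ?_
            rw [hhdef]
            simp only [if_neg hvr, if_neg hnr]
            rw [← EReal.coe_add, EReal.coe_le_coe_iff]
            have : fz v + 1 ≤ G.toGame.w v v' + (fz v' + 1) := by omega
            exact_mod_cast this
    have hival : ∀ i v, hfun v ≤ G.ival i v := by
      intro i
      induction i with
      | zero =>
        intro v
        by_cases hvt : v = G.t
        · subst hvt
          rw [ival_target, hhdef]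
          simp only [if_pos hreacht, hfzt]
          norm_num
        · rw [G.ival_zero_ne v hvt]
          exact le_top
      | succ i ih =>
        intro v
        rw [G.ival_succ_eq i v]
        exact le_trans (hFh v) (G.Fop_mono ih v)
    have hfinal := hival J u0
    rw [hcoe u0, hhdef] at hfinal
    simp only [if_neg hu0] at hfinal
    rw [EReal.coe_le_coe_iff] at hfinal
    have : fz u0 + 1 ≤ fz u0 := by exact_mod_cast hfinal
    omega
  have hquant : ∀ k (v : V), G.EqReach fz k v → -((k:ℤ) * W) ≤ fz v := by
    intro k
    induction k with
    | zero =>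
      intro v hv
      rw [show v = G.t from hv, hfzt]
      simp
    | succ k ih =>
      intro v hv
      have hW0 : (0:ℤ) ≤ (W:ℤ) := by positivity
      rcases hv with h | ⟨v', ⟨hE, heq⟩, hv'⟩
      · have h1 := ih v h
        push_cast
        push_cast at h1
        linarith
      · have h1 := ih v' hv'
        have h2 : -(W:ℤ) ≤ G.toGame.w v v' := (abs_le.mp (hW v v' hE)).1
        rw [heq]
        push_cast
        push_cast at h1
        linarith
  intro i v
  have hfzlow : -(((n-1:ℕ):ℤ) * W) ≤ fz v := by
    have h1 := hquant K v (hall v)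
    have h2 : (K:ℤ) ≤ ((n-1:ℕ):ℤ) := by
      have : K ≤ n - 1 := by omega
      exact_mod_cast this
    have hW0 : (0:ℤ) ≤ (W:ℤ) := by positivity
    nlinarith
  rcases le_total i J with hij | hji
  · refine le_trans ?_ (G.ival_antitone hij v)
    rw [hcoe v, EReal.coe_le_coe_iff]
    exact_mod_cast hfzlow
  · rw [hstab i hji, hcoe v, EReal.coe_le_coe_iff]
    exact_mod_cast hfzlow

end MCRGame

/-- in an MCR game all of whose vertices have finite value, the sequence
`(val_i)` is non-increasing and stabilises after at most
`(2|V|−1)·W·|V| + |V|` steps. -/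
theorem statement_8 {V : Type} [Fintype V] (G : MCRGame V) (W : ℕ)
    (hW : ∀ v v', G.E v v' → |G.w v v'| ≤ (W : ℤ))
    (hfin : ∀ v : V, ∃ m : ℤ, G.Val v = ((m : ℝ) : EReal)) :
    (∀ i j : ℕ, i ≤ j → ∀ v : V, G.ival j v ≤ G.ival i v) ∧
    (∀ i : ℕ,
      (2 * Fintype.card V - 1) * W * Fintype.card V + Fintype.card V ≤ i →
      G.ival i =
        G.ival ((2 * Fintype.card V - 1) * W * Fintype.card V + Fintype.card V)) := by
  classical
  refine ⟨fun i j hij v => G.ival_antitone hij v, ?_⟩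
  intro i hi
  set n := Fintype.card V with hn
  set N := (2 * n - 1) * W * n + n with hN
  have hn1 : 1 ≤ n := Fintype.card_pos_iff.mpr ⟨G.t⟩
  have hspec : ∀ j v, n ≤ j → G.ival j v = ((G.zval j v : ℝ) : EReal) :=
    fun j v hj => G.zval_spec hfin j v hj
  have hzup : ∀ v, G.zval n v ≤ (n:ℤ) * W := by
    intro v
    rcases G.ival_upper hW n v with htop | hle
    · exact absurd htop (G.ival_ne_top_of_ge hfin n v (le_refl n))
    · rw [hspec n v (le_refl n)] at hle
      rw [EReal.coe_le_coe_iff] at hle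
      exact_mod_cast hle
  have hzanti : ∀ j v, n ≤ j → G.zval (j+1) v ≤ G.zval j v := by
    intro j v hj
    have h1 := G.ival_antitone (Nat.le_succ j) v
    rw [hspec j v hj, hspec (j+1) v (by omega)] at h1
    rw [EReal.coe_le_coe_iff] at h1
    exact_mod_cast h1
  have hzmono : ∀ j v, n ≤ j → G.zval j v ≤ G.zval n v := by
    intro j v hj
    induction j, hj using Nat.le_induction with
    | base => exact le_refl _
    | succ j hnj ih => exact le_trans (hzanti j v hnj) ih
  have hzlow : ∀ j v, n ≤ j → -(((n-1:ℕ):ℤ) * W) ≤ G.zval j v := by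
    intro j v hj
    have h1 := G.ival_lower hW hfin j v
    rw [hspec j v hj, EReal.coe_le_coe_iff] at h1
    exact_mod_cast h1
  have hsumconst : ∀ c : ℤ, (∑ _v : V, c) = (n:ℤ) * c := by
    intro c
    rw [Finset.sum_const, Finset.card_univ, ← hn, nsmul_eq_mul]
  obtain ⟨i0, hi0n, hi0N, hi0⟩ : ∃ i0, n ≤ i0 ∧ i0 ≤ N ∧ G.ival (i0+1) = G.ival i0 := by
    by_contra hcon
    push_neg at hcon
    set ssum : ℕ → ℤ := fun j => ∑ v : V, G.zval j v with hssum
    have hdrop : ∀ j, n ≤ j → j ≤ N → ssum (j+1) ≤ ssum j - 1 := by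
      intro j hj hjN
      have hne := hcon j hj hjN
      have hex : ∃ v, G.ival (j+1) v ≠ G.ival j v := by
        by_contra hc
        push_neg at hc
        exact hne (funext hc)
      obtain ⟨v0, hv0⟩ := hex
      have hv0lt : G.zval (j+1) v0 < G.zval j v0 := by
        refine lt_of_le_of_ne (hzanti j v0 hj) ?_
        intro he
        apply hv0
        rw [hspec (j+1) v0 (by omega), hspec j v0 hj, he]
      have hsum : (∑ v : V, G.zval (j+1) v) < ∑ v : V, G.zval j v :=
        Finset.sum_lt_sum (fun v _ => hzanti j v hj) ⟨v0, Finset.mem_univ v0, hv0lt⟩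
      simp only [hssum]
      omega
    have htel : ∀ m, m ≤ N + 1 - n → ssum (n + m) + (m:ℤ) ≤ ssum n := by
      intro m hm
      induction m with
      | zero => simp
      | succ m ih =>
        have h1 := ih (by omega)
        have h2 := hdrop (n+m) (by omega) (by omega)
        have h3 : n + (m+1) = (n+m)+1 := by omega
        rw [h3]
        push_cast
        push_cast at h1
        omega
    have hfinal := htel (N + 1 - n) (le_refl _)
    have hub : ssum n ≤ (n:ℤ) * ((n:ℤ) * W) := by
      calc ssum n ≤ ∑ _v : V, ((n:ℤ) * W) := Finset.sum_le_sum (fun v _ => hzup v)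
        _ = (n:ℤ) * ((n:ℤ) * W) := hsumconst _
    have hlb : (n:ℤ) * (-(((n-1:ℕ):ℤ) * W)) ≤ ssum (n + (N + 1 - n)) := by
      calc (n:ℤ) * (-(((n-1:ℕ):ℤ) * W)) = ∑ _v : V, (-(((n-1:ℕ):ℤ) * W)) := (hsumconst _).symm
        _ ≤ ssum (n + (N + 1 - n)) := Finset.sum_le_sum (fun v _ => hzlow _ v (by omega))
    have hc1 : ((N + 1 - n : ℕ) : ℤ) = ((2*n-1) * W * n : ℕ) + 1 := by
      have : N + 1 - n = (2*n-1) * W * n + 1 := by omega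
      exact_mod_cast this
    have hc2 : (((2*n-1) * W * n : ℕ) : ℤ) = (2*(n:ℤ)-1) * W * n := by
      have h4 : ((2*n-1 : ℕ) : ℤ) = 2*(n:ℤ)-1 := by omega
      push_cast
      rw [h4]
    have hc3 : (((n-1:ℕ)) : ℤ) = (n:ℤ) - 1 := by omega
    rw [hc1, hc2] at hfinal
    rw [hc3] at hlb
    have key : (1:ℤ) ≤ 0 := by nlinarith [hfinal, hub, hlb]
    omega
  have hstab := G.ival_stab hi0
  have h1 : G.ival i = G.ival i0 := hstab i (le_trans hi0N hi)
  have h2 : G.ival N = G.ival i0 := hstab N hi0N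
  rw [h1, h2]
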